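/- The function u₊: S^n → ℝ defined by u₊(x) = ∫_{x_{n+1}}^1 √((2−2s)/(1−s²)) ds is a backward weak KAM solution for the value c = 1 of the spherical pendulum: u₊ ≺ L+1, and for every x ∈ S^n there exists a C¹ curve γ_x: (−∞,0] → S^n with γ_x(0) = x and u₊(x) − u₊(γ_x(−t)) = ∫_{−t}^0 L(γ_x(s), γ̇_x(s)) ds + t for all t ≥ 0. -/

import Mathlib

open Set

noncomputable section

namespace SphericalPendulum

variable (n : ℕ)

/-- The ambient Euclidean space `ℝ^{n+1}`. -/
abbrev Amb := EuclideanSpace ℝ (Fin (n + 1))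

/-- The unit sphere `S^n ⊂ ℝ^{n+1}`. -/
abbrev Sph := Metric.sphere (0 : Amb n) 1

/-- The last coordinate `x_{n+1}` of a point of `ℝ^{n+1}`. -/
def lastCoord (x : Amb n) : ℝ := x (Fin.last n)

/-- The spherical-pendulum Lagrangian `L(x,v) = ½‖v‖² − x_{n+1}`. -/
def Lsph (x v : Amb n) : ℝ := ‖v‖ ^ 2 / 2 - lastCoord n x

/-- Velocity of a curve in the sphere, computed in the ambient space. -/
def sVel (γ : ℝ → Sph n) (s : ℝ) : Amb n := deriv (fun t : ℝ => (γ t : Amb n)) s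

/-- Piecewise `C¹` curve `γ : [a,b] → S^n`. -/
def sPiecewiseC1On (γ : ℝ → Sph n) (a b : ℝ) : Prop :=
  ContinuousOn (fun t : ℝ => (γ t : Amb n)) (Icc a b) ∧
    ∃ (k : ℕ) (t : Fin (k + 1) → ℝ), StrictMono t ∧ t 0 = a ∧ t (Fin.last k) = b ∧
      ∀ i : Fin k, ContDiffOn ℝ 1 (fun s : ℝ => (γ s : Amb n))
        (Icc (t i.castSucc) (t i.succ))

/-- The action `A_L(γ) = ∫_a^b L(γ(s), γ̇(s)) ds` of a curve `γ : [a,b] → S^n`. -/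
def sAction (γ : ℝ → Sph n) (a b : ℝ) : ℝ :=
  ∫ s in a..b, Lsph n (γ s : Amb n) (sVel n γ s)

/-- `u ≺ L + c` : `u` is dominated by `L + c`. -/
def sDominated (c : ℝ) (u : Sph n → ℝ) : Prop :=
  ∀ (γ : ℝ → Sph n) (a b : ℝ), a ≤ b → sPiecewiseC1On n γ a b →
    u (γ b) - u (γ a) ≤ sAction n γ a b + c * (b - a)

/-- The weak KAM solution `u₊(x) = ∫_{x_{n+1}}^1 √((2−2s)/(1−s²)) ds`. -/
def uPlus (x : Sph n) : ℝ :=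
  ∫ s in (lastCoord n (x : Amb n))..1, Real.sqrt ((2 - 2 * s) / (1 - s ^ 2))

/-- Backward weak KAM solution for the value `c`, for the spherical pendulum. -/
def sBackwardWeakKAM (c : ℝ) (u : Sph n → ℝ) : Prop :=
  sDominated n c u ∧
    ∀ x : Sph n, ∃ γ : ℝ → Sph n, γ 0 = x ∧
      ContDiffOn ℝ 1 (fun s : ℝ => (γ s : Amb n)) (Iic 0) ∧
      ∀ t : ℝ, 0 ≤ t → u x - u (γ (-t)) = sAction n γ (-t) 0 + c * t

/-- The north pole `N = (0,…,0,1) ∈ S^n`. -/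
def northPole : Sph n :=
  ⟨EuclideanSpace.single (Fin.last n) (1 : ℝ), by simp⟩


section AuxiliaryWeakKAM

open MeasureTheory intervalIntegral

lemma sqrt_two_div {s : ℝ} (hs : 0 < 1 + s) :
    Real.sqrt (2 / (1 + s)) = Real.sqrt 2 * (1 + s) ^ (-(1/2) : ℝ) := by
  rw [Real.sqrt_div' 2 hs.le, Real.sqrt_eq_rpow 2, Real.sqrt_eq_rpow (1+s),
    Real.rpow_neg hs.le, div_eq_mul_inv]

lemma integrand_eq {s : ℝ} (hs1 : -1 < s) (hs2 : s < 1) :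
    Real.sqrt ((2 - 2 * s) / (1 - s ^ 2)) = Real.sqrt (2 / (1 + s)) := by
  congr 1
  rw [div_eq_div_iff (by nlinarith) (by linarith)]
  ring

lemma key_integrable {r : ℝ} (h1 : -1 ≤ r) (h2 : r ≤ 1) :
    IntervalIntegrable (fun s => Real.sqrt ((2 - 2 * s) / (1 - s ^ 2))) volume r 1 := by
  have hbase : IntervalIntegrable (fun s : ℝ => s ^ (-(1/2) : ℝ)) volume (1 + r) 2 :=
    intervalIntegrable_rpow' (by norm_num)
  have hshift : IntervalIntegrable (fun s : ℝ => (1 + s) ^ (-(1/2) : ℝ)) volume r 1 := by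
    have := hbase.comp_add_left 1
    norm_num at this
    exact this
  have hmul := hshift.const_mul (Real.sqrt 2)
  rw [intervalIntegrable_iff_integrableOn_Ioo_of_le (by linarith)] at hmul ⊢
  refine hmul.congr_fun (fun s hs => ?_) measurableSet_Ioo
  obtain ⟨hs1, hs2⟩ := hs
  rw [integrand_eq (lt_of_le_of_lt h1 hs1) hs2, sqrt_two_div (by linarith)]

lemma key_integral {r : ℝ} (h1 : -1 ≤ r) (h2 : r ≤ 1) :
    ∫ s in r..1, Real.sqrt ((2 - 2 * s) / (1 - s ^ 2)) = 4 - 2 * Real.sqrt (2 + 2 * r) := by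
  have heq : ∫ s in r..1, Real.sqrt ((2 - 2 * s) / (1 - s ^ 2))
      = (2 * Real.sqrt (2 + 2 * 1)) - 2 * Real.sqrt (2 + 2 * r) := by
    apply integral_eq_sub_of_hasDeriv_right_of_le (f := fun s => 2 * Real.sqrt (2+2*s)) h2
    · exact (continuousOn_const.mul ((Real.continuous_sqrt.comp
        (by continuity)).continuousOn)).congr (fun x _ => rfl)
    · intro s hs
      have hs1 : -1 < s := lt_of_le_of_lt h1 hs.1
      have hs2 : s < 1 := hs.2
      have hpos : (0:ℝ) < 2 + 2 * s := by linarith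
      have hsq : HasDerivAt (fun x : ℝ => 2 + 2 * x) 2 s := by
        simpa using ((hasDerivAt_id s).const_mul 2).const_add 2
      have := (hsq.sqrt (by positivity)).const_mul 2
      have heqv : 2 * (2 / (2 * Real.sqrt (2 + 2 * s)))
          = Real.sqrt ((2 - 2 * s) / (1 - s ^ 2)) := by
        rw [integrand_eq hs1 hs2]
        have h4 : (2:ℝ) / (1 + s) = 4 / (2 + 2*s) := by
          rw [div_eq_div_iff (by linarith) (by linarith)]; ring
        rw [h4, Real.sqrt_div' 4 hpos.le]
        have : Real.sqrt 4 = 2 := by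
          rw [show (4:ℝ) = 2^2 by norm_num, Real.sqrt_sq (by norm_num)]
        rw [this]
        field_simp
      rw [heqv] at this
      exact this.hasDerivWithinAt
    · exact key_integrable h1 h2
  rw [heq]
  norm_num

variable {n}

def Nv : Amb n := EuclideanSpace.single (Fin.last n) (1 : ℝ)

lemma inner_Nv (v : Amb n) : (inner ℝ v (Nv : Amb n) : ℝ) = lastCoord n v := by
  rw [Nv, EuclideanSpace.inner_single_right]; simp [lastCoord]

lemma inner_Nv' (v : Amb n) : (inner ℝ (Nv : Amb n) v : ℝ) = lastCoord n v := by
  rw [real_inner_comm]; exact inner_Nv v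

lemma norm_Nv : ‖(Nv : Amb n)‖ = 1 := by simp [Nv]

lemma sqrt_add_le {a b : ℝ} (ha : 0 ≤ a) (hb : 0 ≤ b) :
    Real.sqrt (a + b) ≤ Real.sqrt a + Real.sqrt b := by
  rw [show Real.sqrt a + Real.sqrt b
      = Real.sqrt ((Real.sqrt a + Real.sqrt b) ^ 2) from
    (Real.sqrt_sq (by positivity)).symm]
  apply Real.sqrt_le_sqrt
  nlinarith [Real.sq_sqrt ha, Real.sq_sqrt hb, Real.sqrt_nonneg a, Real.sqrt_nonneg b,
    mul_nonneg (Real.sqrt_nonneg a) (Real.sqrt_nonneg b)]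

/-- The key pointwise inequality for domination. -/
lemma pointwise_ineq {ε : ℝ} (hε : 0 < ε) {x v : Amb n} (hx : ‖x‖ = 1)
    (hxv : (inner ℝ x v : ℝ) = 0) :
    -2 * lastCoord n v / Real.sqrt (ε + 2 + 2 * lastCoord n x)
      ≤ ‖v‖ ^ 2 / 2 + 1 - lastCoord n x := by
  set r := lastCoord n x with hr
  set a := ‖v‖ with hav
  set vl := lastCoord n v with hvl
  have ha0 : 0 ≤ a := norm_nonneg v
  have hrabs : |r| ≤ 1 := by
    have := abs_real_inner_le_norm x (Nv : Amb n)
    rwa [inner_Nv, norm_Nv, hx, one_mul] at this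
  have hr1 : -1 ≤ r := neg_le_of_abs_le hrabs
  have hr2 : r ≤ 1 := le_of_abs_le hrabs
  -- bound on |vl|
  have hnorm_sub : ‖(Nv : Amb n) - r • x‖ = Real.sqrt (1 - r) * Real.sqrt (1 + r) := by
    have h1 : (inner ℝ (Nv : Amb n) (r • x) : ℝ) = r ^ 2 := by
      rw [real_inner_smul_right, inner_Nv']; ring
    have h2 : ‖r • x‖ ^ 2 = r ^ 2 := by
      rw [norm_smul, hx, mul_one, Real.norm_eq_abs, sq_abs]
    have hsq : ‖(Nv : Amb n) - r • x‖ ^ 2 = 1 - r ^ 2 := by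
      rw [norm_sub_sq_real, h1, h2, norm_Nv]; ring
    rw [show ‖(Nv : Amb n) - r • x‖ = Real.sqrt (‖(Nv : Amb n) - r • x‖ ^ 2) from
      (Real.sqrt_sq (norm_nonneg _)).symm, hsq,
      show (1 : ℝ) - r ^ 2 = (1 - r) * (1 + r) by ring,
      Real.sqrt_mul (by linarith)]
  have hvlbound : |vl| ≤ a * (Real.sqrt (1 - r) * Real.sqrt (1 + r)) := by
    have hvl2 : vl = (inner ℝ v ((Nv : Amb n) - r • x) : ℝ) := by
      rw [inner_sub_right, inner_Nv, real_inner_smul_right, real_inner_comm, hxv]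
      ring
    rw [hvl2]
    calc |(inner ℝ v ((Nv : Amb n) - r • x) : ℝ)| ≤ ‖v‖ * ‖(Nv : Amb n) - r • x‖ :=
          abs_real_inner_le_norm _ _
      _ = a * (Real.sqrt (1 - r) * Real.sqrt (1 + r)) := by rw [hnorm_sub]
  set D := Real.sqrt (ε + 2 + 2 * r) with hD
  have hDpos : 0 < D := Real.sqrt_pos.2 (by linarith)
  have hDlow : Real.sqrt 2 * Real.sqrt (1 + r) ≤ D := by
    rw [← Real.sqrt_mul (by norm_num)]
    apply Real.sqrt_le_sqrt
    linarith
  have hs2 : Real.sqrt 2 ^ 2 = 2 := Real.sq_sqrt (by norm_num)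
  set t := Real.sqrt (1 - r) with htdef
  have ht0 : 0 ≤ t := Real.sqrt_nonneg _
  have ht2 : t ^ 2 = 1 - r := Real.sq_sqrt (by linarith)
  have key : 2 * Real.sqrt 2 * a * t ≤ a ^ 2 + 2 * t ^ 2 := by
    nlinarith [sq_nonneg (a - Real.sqrt 2 * t), hs2, sq_nonneg t]
  have step2 : 2 * a * t ≤ Real.sqrt 2 * (a ^ 2 / 2 + (1 - r)) := by
    have h := mul_le_mul_of_nonneg_left key
      (by positivity : (0:ℝ) ≤ Real.sqrt 2 / 2)
    have e1 : Real.sqrt 2 / 2 * (2 * Real.sqrt 2 * a * t) = 2 * a * t := by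
      linear_combination a * t * hs2
    have e2 : Real.sqrt 2 / 2 * (a ^ 2 + 2 * t ^ 2)
        = Real.sqrt 2 * (a ^ 2 / 2 + (1 - r)) := by
      rw [← ht2]; ring
    rw [e1, e2] at h
    exact h
  rw [div_le_iff₀ hDpos]
  have c1 : -2 * vl ≤ 2 * a * (t * Real.sqrt (1 + r)) := by
    have h1 := neg_abs_le vl
    have h2 : |vl| ≤ a * (t * Real.sqrt (1 + r)) := hvlbound
    linarith
  have hnn : 0 ≤ a ^ 2 / 2 + (1 - r) := by nlinarith [sq_nonneg a]
  have c2 : 2 * a * (t * Real.sqrt (1 + r))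
      ≤ Real.sqrt 2 * (a ^ 2 / 2 + (1 - r)) * Real.sqrt (1 + r) := by
    have := mul_le_mul_of_nonneg_right step2 (Real.sqrt_nonneg (1 + r))
    linarith [this]
  have c3 : Real.sqrt 2 * (a ^ 2 / 2 + (1 - r)) * Real.sqrt (1 + r)
      ≤ (a ^ 2 / 2 + 1 - r) * D := by
    calc Real.sqrt 2 * (a ^ 2 / 2 + (1 - r)) * Real.sqrt (1 + r)
        = (a ^ 2 / 2 + (1 - r)) * (Real.sqrt 2 * Real.sqrt (1 + r)) := by ring
      _ ≤ (a ^ 2 / 2 + (1 - r)) * D := mul_le_mul_of_nonneg_left hDlow hnn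
      _ = (a ^ 2 / 2 + 1 - r) * D := by ring
  linarith

lemma norm_sph (x : Sph n) : ‖(x : Amb n)‖ = 1 := by
  have := x.2
  simpa [mem_sphere_zero_iff_norm] using this

lemma lastCoord_cont : Continuous (fun x : Amb n => lastCoord n x) :=
  (EuclideanSpace.proj (Fin.last n)).continuous

lemma tangent_vel (γ : ℝ → Sph n) {s : ℝ} {v : Amb n}
    (hv : HasDerivAt (fun t : ℝ => (γ t : Amb n)) v s) :
    (inner ℝ ((γ s : Amb n)) v : ℝ) = 0 := by
  have h1 : HasDerivAt (fun t : ℝ => (inner ℝ ((γ t : Amb n)) ((γ t : Amb n)) : ℝ))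
      ((inner ℝ ((γ s : Amb n)) v : ℝ) + (inner ℝ v ((γ s : Amb n)) : ℝ)) s :=
    HasDerivAt.inner _ hv hv
  have h2 : (fun t : ℝ => (inner ℝ ((γ t : Amb n)) ((γ t : Amb n)) : ℝ)) = fun _ => (1:ℝ) := by
    funext t
    rw [real_inner_self_eq_norm_sq, norm_sph]
    norm_num
  rw [h2] at h1
  have h3 := h1.unique (hasDerivAt_const s 1)
  rw [real_inner_comm] at h3 ⊢
  linarith [h3]

lemma piece_ineq {ε : ℝ} (hε : 0 < ε) (γ : ℝ → Sph n) {c d : ℝ} (hcd : c < d)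
    (hC : ContDiffOn ℝ 1 (fun s : ℝ => (γ s : Amb n)) (Icc c d)) :
    (4 - 2 * Real.sqrt (ε + 2 + 2 * lastCoord n (γ d : Amb n)))
      - (4 - 2 * Real.sqrt (ε + 2 + 2 * lastCoord n (γ c : Amb n)))
      ≤ ∫ s in c..d, (Lsph n (γ s : Amb n) (sVel n γ s) + 1) := by
  set f : ℝ → Amb n := fun s => (γ s : Amb n) with hf
  set φ : ℝ → ℝ := fun s => Lsph n (f s) (sVel n γ s) + 1 with hφ
  have hsphere : ∀ s, ‖f s‖ = 1 := fun s => norm_sph (γ s)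
  have hDv : ∀ s ∈ Ioo c d, HasDerivAt f (sVel n γ s) s := by
    intro s hs
    have h1 : ContDiffAt ℝ 1 f s := hC.contDiffAt (Icc_mem_nhds hs.1 hs.2)
    exact (h1.differentiableAt one_ne_zero).hasDerivAt
  -- integrability
  have hdw : ContinuousOn (derivWithin f (Icc c d)) (Icc c d) :=
    hC.continuousOn_derivWithin (uniqueDiffOn_Icc hcd) le_rfl
  have hψcont : ContinuousOn
      (fun s => ‖derivWithin f (Icc c d) s‖ ^ 2 / 2 - lastCoord n (f s) + 1) (Icc c d) :=
    (((hdw.norm.pow 2).div_const 2).sub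
      (lastCoord_cont.comp_continuousOn hC.continuousOn)).add continuousOn_const
  have heqIoo : ∀ s ∈ Ioo c d,
      ‖derivWithin f (Icc c d) s‖ ^ 2 / 2 - lastCoord n (f s) + 1 = φ s := by
    intro s hs
    rw [hφ]
    simp only [Lsph]
    rw [derivWithin_of_mem_nhds (Icc_mem_nhds hs.1 hs.2)]
    rfl
  have hint : IntegrableOn φ (Icc c d) volume := by
    have h1 : IntegrableOn
        (fun s => ‖derivWithin f (Icc c d) s‖ ^ 2 / 2 - lastCoord n (f s) + 1)
        (Icc c d) volume := hψcont.integrableOn_Icc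
    refine h1.congr ?_
    rw [← Measure.restrict_congr_set Ioo_ae_eq_Icc]
    filter_upwards [ae_restrict_mem measurableSet_Ioo] with s hs using heqIoo s hs
  have hintInterval : IntervalIntegrable φ volume c d := by
    rw [intervalIntegrable_iff_integrableOn_Icc_of_le hcd.le]
    exact hint
  -- the function g
  set g : ℝ → ℝ := fun s => 4 - 2 * Real.sqrt (ε + 2 + 2 * lastCoord n (f s)) with hg
  have hl : ContinuousOn (fun s => ε + 2 + 2 * lastCoord n (f s)) (Icc c d) :=
    continuousOn_const.add
      (continuousOn_const.mul (lastCoord_cont.comp_continuousOn hC.continuousOn))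
  have hgcont : ContinuousOn g (Icc c d) :=
    continuousOn_const.sub
      (continuousOn_const.mul (Real.continuous_sqrt.comp_continuousOn hl))
  have hgderiv : ∀ s ∈ Ioo c d, HasDerivAt g
      (-2 * lastCoord n (sVel n γ s) / Real.sqrt (ε + 2 + 2 * lastCoord n (f s))) s := by
    intro s hs
    have hv := hDv s hs
    have hlast : HasDerivAt (fun t => lastCoord n (f t)) (lastCoord n (sVel n γ s)) s := by
      have h := ((EuclideanSpace.proj (Fin.last n) : Amb n →L[ℝ] ℝ).hasFDerivAt
        (x := f s)).comp_hasDerivAt s hv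
      exact h
    have harg : HasDerivAt (fun t => ε + 2 + 2 * lastCoord n (f t))
        (2 * lastCoord n (sVel n γ s)) s := by
      simpa using (hlast.const_mul 2).const_add (ε + 2)
    have hposarg : (0:ℝ) < ε + 2 + 2 * lastCoord n (f s) := by
      have h := abs_le.1 (by
        have := abs_real_inner_le_norm (f s) (Nv : Amb n)
        rwa [inner_Nv, norm_Nv, hsphere, one_mul] at this)
      linarith [h.1]
    have hsqrt := harg.sqrt (ne_of_gt hposarg)
    have := (hsqrt.const_mul 2).const_sub 4
    refine this.congr_deriv ?_
    have hsp : Real.sqrt (ε + 2 + 2 * lastCoord n (f s)) > 0 := Real.sqrt_pos.2 hposarg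
    field_simp
  -- apply the FTC inequality
  have happ := sub_le_integral_of_hasDeriv_right_of_le hcd.le hgcont
    (fun s hs => (hgderiv s hs).hasDerivWithinAt) hint
    (fun s hs => by
      have htan := tangent_vel γ (hDv s hs)
      have := pointwise_ineq hε (hsphere s) htan
      simp only [hφ, Lsph]
      linarith)
  simpa [hg] using happ

lemma lastCoord_abs_le {x : Amb n} : |lastCoord n x| ≤ ‖x‖ := by
  have h := abs_real_inner_le_norm (x : Amb n) (Nv : Amb n)
  rwa [inner_Nv, norm_Nv, mul_one] at h

lemma lastCoord_mem (x : Sph n) : lastCoord n (x : Amb n) ∈ Icc (-1 : ℝ) 1 := by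
  have h := lastCoord_abs_le (x := (x : Amb n))
  rw [norm_sph] at h
  exact ⟨neg_le_of_abs_le h, le_of_abs_le h⟩

lemma uPlus_eq (x : Sph n) :
    uPlus n x = 4 - 2 * Real.sqrt (2 + 2 * lastCoord n (x : Amb n)) :=
  key_integral (lastCoord_mem x).1 (lastCoord_mem x).2

lemma piece_integrable (γ : ℝ → Sph n) {c d : ℝ} (hcd : c < d)
    (hC : ContDiffOn ℝ 1 (fun s : ℝ => (γ s : Amb n)) (Icc c d)) :
    IntervalIntegrable (fun s => Lsph n (γ s : Amb n) (sVel n γ s) + 1) volume c d := by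
  set f : ℝ → Amb n := fun s => (γ s : Amb n) with hf
  set φ : ℝ → ℝ := fun s => Lsph n (f s) (sVel n γ s) + 1 with hφ
  have hdw : ContinuousOn (derivWithin f (Icc c d)) (Icc c d) :=
    hC.continuousOn_derivWithin (uniqueDiffOn_Icc hcd) le_rfl
  have hψcont : ContinuousOn
      (fun s => ‖derivWithin f (Icc c d) s‖ ^ 2 / 2 - lastCoord n (f s) + 1) (Icc c d) :=
    (((hdw.norm.pow 2).div_const 2).sub
      (lastCoord_cont.comp_continuousOn hC.continuousOn)).add continuousOn_const
  have heqIoo : ∀ s ∈ Ioo c d,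
      ‖derivWithin f (Icc c d) s‖ ^ 2 / 2 - lastCoord n (f s) + 1 = φ s := by
    intro s hs
    rw [hφ]
    simp only [Lsph]
    rw [derivWithin_of_mem_nhds (Icc_mem_nhds hs.1 hs.2)]
    rfl
  have hint : IntegrableOn φ (Icc c d) volume := by
    have h1 : IntegrableOn
        (fun s => ‖derivWithin f (Icc c d) s‖ ^ 2 / 2 - lastCoord n (f s) + 1)
        (Icc c d) volume := hψcont.integrableOn_Icc
    refine h1.congr ?_
    rw [← Measure.restrict_congr_set Ioo_ae_eq_Icc]
    filter_upwards [ae_restrict_mem measurableSet_Ioo] with s hs using heqIoo s hs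
  rw [intervalIntegrable_iff_integrableOn_Icc_of_le hcd.le]
  exact hint

theorem uPlus_dominated : sDominated n 1 (uPlus n) := by
  rintro γ a b hab ⟨hcont, k, t, hmono, ht0, htl, hpieces⟩
  set φ : ℝ → ℝ := fun s => Lsph n (γ s : Amb n) (sVel n γ s) + 1 with hφdef
  set T : ℕ → ℝ := fun i => t ⟨min i k, by omega⟩ with hTdef
  have hT : ∀ i : ℕ, (h : i ≤ k) → T i = t ⟨i, by omega⟩ := by
    intro i hi
    simp only [hTdef]
    congr 1
    exact Fin.ext (min_eq_left hi)
  have hT0 : T 0 = a := by rw [hT 0 (Nat.zero_le k)]; exact ht0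
  have hTk : T k = b := by rw [hT k le_rfl]; exact htl
  have hTlt : ∀ i < k, T i < T (i+1) := by
    intro i hi
    rw [hT i hi.le, hT (i+1) hi]
    apply hmono
    simp [Fin.lt_def]
  have hpiece' : ∀ i < k, ContDiffOn ℝ 1 (fun s : ℝ => (γ s : Amb n))
      (Icc (T i) (T (i+1))) := by
    intro i hi
    have := hpieces ⟨i, hi⟩
    rw [hT i hi.le, hT (i+1) hi]
    convert this using 3 <;> rfl
  have hφint : ∀ i < k, IntervalIntegrable φ volume (T i) (T (i+1)) := by
    intro i hi
    exact piece_integrable γ (hTlt i hi) (hpiece' i hi)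
  have hintall : IntervalIntegrable φ volume a b := by
    rw [← hT0, ← hTk]
    exact IntervalIntegrable.trans_iterate hφint
  have hsum := intervalIntegral.sum_integral_adjacent_intervals (μ := volume) (f := φ) hφint
  have haction : sAction n γ a b + 1 * (b - a) = ∫ s in a..b, φ s := by
    have h1 : (fun s => Lsph n (γ s : Amb n) (sVel n γ s)) = fun s => φ s - 1 := by
      funext s; simp [hφdef]
    rw [sAction, h1, intervalIntegral.integral_sub hintall intervalIntegrable_const,
      intervalIntegral.integral_const]
    simp
  apply le_of_forall_pos_le_add
  intro ε' hε'
  set ε : ℝ := (ε'/2)^2 with hεdef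
  have hε : 0 < ε := by positivity
  set G : ℕ → ℝ := fun i => 4 - 2 * Real.sqrt (ε + 2 + 2 * lastCoord n (γ (T i) : Amb n))
    with hGdef
  have htel : ∑ i ∈ Finset.range k, (G (i+1) - G i) = G k - G 0 :=
    Finset.sum_range_sub G k
  have hsumle : G k - G 0 ≤ ∫ s in a..b, φ s := by
    rw [← htel, ← hT0, ← hTk, ← hsum]
    apply Finset.sum_le_sum
    intro i hi
    have hik := Finset.mem_range.1 hi
    exact piece_ineq hε γ (hTlt i hik) (hpiece' i hik)
  -- compare uPlus with the smoothed version
  have hb2 : ∀ y : Sph n, (0:ℝ) ≤ 2 + 2 * lastCoord n (y : Amb n) := by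
    intro y; have := (lastCoord_mem y).1; linarith
  have hGk : G k = 4 - 2 * Real.sqrt (ε + 2 + 2 * lastCoord n (γ b : Amb n)) := by
    simp only [hGdef]; rw [hTk]
  have hG0 : G 0 = 4 - 2 * Real.sqrt (ε + 2 + 2 * lastCoord n (γ a : Amb n)) := by
    simp only [hGdef]; rw [hT0]
  have hcompb : uPlus n (γ b) ≤ G k + 2 * Real.sqrt ε := by
    rw [uPlus_eq, hGk]
    have h1 : Real.sqrt (ε + (2 + 2 * lastCoord n (γ b : Amb n)))
        ≤ Real.sqrt ε + Real.sqrt (2 + 2 * lastCoord n (γ b : Amb n)) :=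
      sqrt_add_le hε.le (hb2 _)
    have h2 : ε + (2 + 2 * lastCoord n (γ b : Amb n))
        = ε + 2 + 2 * lastCoord n (γ b : Amb n) := by ring
    rw [h2] at h1
    linarith
  have hcompa : G 0 ≤ uPlus n (γ a) := by
    rw [uPlus_eq, hG0]
    have h1 : Real.sqrt (2 + 2 * lastCoord n (γ a : Amb n))
        ≤ Real.sqrt (ε + 2 + 2 * lastCoord n (γ a : Amb n)) := by
      apply Real.sqrt_le_sqrt; linarith
    linarith
  have hsqeps : 2 * Real.sqrt ε = ε' := by
    rw [hεdef, Real.sqrt_sq (by linarith)]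
    ring
  rw [haction]
  linarith

def Pfun (v : ℝ) : ℝ := 1 - 8 * v ^ 2 / (1 + v ^ 2) ^ 2
def Qfun (v : ℝ) : ℝ := (4 * v - 4 * v ^ 3) / (1 + v ^ 2) ^ 2
def Ffun (v : ℝ) : ℝ := (4 * v ^ 2 - 4) / (1 + v ^ 2)

lemma PQ_sq (v : ℝ) : Pfun v ^ 2 + Qfun v ^ 2 = 1 := by
  have h : (1 + v ^ 2 : ℝ) ≠ 0 := by positivity
  rw [Pfun, Qfun]
  field_simp
  ring

lemma hv2 (v : ℝ) : HasDerivAt (fun v : ℝ => 1 + v ^ 2) (2 * v) v := by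
  simpa using (hasDerivAt_pow 2 v).const_add 1

lemma hasDerivAt_Pfun (v : ℝ) :
    HasDerivAt Pfun (16 * v * (v ^ 2 - 1) / (1 + v ^ 2) ^ 3) v := by
  have hden := (hv2 v).pow 2
  have hnum := (hasDerivAt_pow 2 v).const_mul (8:ℝ)
  have hfrac := hnum.div hden (by simp only [Pi.pow_apply]; positivity)
  have hP := hfrac.const_sub 1
  refine hP.congr_deriv ?_
  have h : (1 + v ^ 2 : ℝ) ≠ 0 := by positivity
  simp only [Pi.pow_apply]
  field_simp
  ring

lemma hasDerivAt_Qfun (v : ℝ) :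
    HasDerivAt Qfun ((4 - 24 * v ^ 2 + 4 * v ^ 4) / (1 + v ^ 2) ^ 3) v := by
  have hden := (hv2 v).pow 2
  have h3 := (hasDerivAt_pow 3 v).const_mul (4:ℝ)
  have hid := ((hasDerivAt_id v).const_mul (4:ℝ))
  have hnum := hid.sub h3
  have hfrac := hnum.div hden (by simp only [Pi.pow_apply]; positivity)
  refine hfrac.congr_deriv ?_
  have h : (1 + v ^ 2 : ℝ) ≠ 0 := by positivity
  simp only [Pi.pow_apply, Pi.sub_apply, id]
  field_simp
  ring

lemma hasDerivAt_Ffun (v : ℝ) :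
    HasDerivAt Ffun (16 * v / (1 + v ^ 2) ^ 2) v := by
  have hnum := ((hasDerivAt_pow 2 v).const_mul (4:ℝ)).sub_const 4
  have hfrac := hnum.div (hv2 v) (by positivity)
  refine hfrac.congr_deriv ?_
  have h : (1 + v ^ 2 : ℝ) ≠ 0 := by positivity
  field_simp
  ring

lemma norm_eq_one_of_sq {y : Amb n} (h : ‖y‖ ^ 2 = 1) : ‖y‖ = 1 := by
  nlinarith [norm_nonneg y]

lemma norm_combo {e : Amb n} (he : ‖e‖ = 1)
    (ho : (inner ℝ (Nv : Amb n) e : ℝ) = 0) (a b : ℝ) :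
    ‖a • (Nv : Amb n) + b • e‖ ^ 2 = a ^ 2 + b ^ 2 := by
  rw [norm_add_sq_real, real_inner_smul_left, real_inner_smul_right, ho,
    norm_smul, norm_smul, norm_Nv, he]
  simp [mul_pow, sq_abs]

lemma lastCoord_Nv : lastCoord n (Nv : Amb n) = 1 := by
  simp [lastCoord, Nv, EuclideanSpace.single_apply]

lemma lastCoord_combo {e : Amb n} (hel : lastCoord n e = 0) (a b : ℝ) :
    lastCoord n (a • (Nv : Amb n) + b • e) = a := by
  have h1 : lastCoord n (a • (Nv : Amb n) + b • e)
      = a * lastCoord n (Nv : Amb n) + b * lastCoord n e := by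
    simp [lastCoord, Nv]
  rw [h1, lastCoord_Nv, hel]
  ring

/-- The heteroclinic calibrating curve through the point `P(c) • N + Q(c) • e`. -/
lemma calib_curve {c : ℝ} (hc0 : 0 < c) (hc1 : c ≤ 1) {e : Amb n} (he : ‖e‖ = 1)
    (hel : lastCoord n e = 0) :
    ∃ γ : ℝ → Sph n, (γ 0 : Amb n) = Pfun c • (Nv : Amb n) + Qfun c • e ∧
      ContDiffOn ℝ 1 (fun s : ℝ => (γ s : Amb n)) (Iic 0) ∧
      ∀ t : ℝ, 0 ≤ t →
        uPlus n (γ 0) - uPlus n (γ (-t)) = sAction n γ (-t) 0 + 1 * t := by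
  have hoNe : (inner ℝ (Nv : Amb n) e : ℝ) = 0 := by
    rw [real_inner_comm, inner_Nv]; exact hel
  set u : ℝ → ℝ := fun s => c * Real.exp s with hudef
  have hu_pos : ∀ s, 0 < u s := fun s => mul_pos hc0 (Real.exp_pos s)
  have hu_le : ∀ s ≤ 0, u s ≤ 1 := by
    intro s hs
    have h1 : Real.exp s ≤ 1 := Real.exp_le_one_iff.2 hs
    have h2 := Real.exp_pos s
    show c * Real.exp s ≤ 1
    nlinarith
  have hu : ∀ s, HasDerivAt u (u s) s := fun s => (Real.hasDerivAt_exp s).const_mul c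
  set γamb : ℝ → Amb n := fun s => Pfun (u s) • (Nv : Amb n) + Qfun (u s) • e with hγdef
  have hsph : ∀ s, γamb s ∈ Metric.sphere (0 : Amb n) 1 := by
    intro s
    rw [mem_sphere_zero_iff_norm]
    exact norm_eq_one_of_sq (by rw [norm_combo he hoNe, PQ_sq])
  set γ : ℝ → Sph n := fun s => ⟨γamb s, hsph s⟩ with hγ
  refine ⟨γ, ?_, ?_, ?_⟩
  · show γamb 0 = Pfun c • (Nv : Amb n) + Qfun c • e
    have : u 0 = c := by simp [hudef]
    rw [hγdef]
    simp only [this]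
  · -- smoothness
    apply ContDiff.contDiffOn
    have hucd : ContDiff ℝ 1 u := (contDiff_const.mul Real.contDiff_exp).of_le le_top
    have hden : ∀ s : ℝ, ((1:ℝ) + u s ^ 2) ^ 2 ≠ 0 := fun s => by positivity
    have hP : ContDiff ℝ 1 (fun s => Pfun (u s)) := by
      simp only [Pfun]
      exact contDiff_const.sub ((contDiff_const.mul (hucd.pow 2)).div ((contDiff_const.add (hucd.pow 2)).pow 2) hden)
    have hQ : ContDiff ℝ 1 (fun s => Qfun (u s)) := by
      simp only [Qfun]
      exact ((contDiff_const.mul hucd).sub (contDiff_const.mul (hucd.pow 3))).div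
        ((contDiff_const.add (hucd.pow 2)).pow 2) hden
    exact (hP.smul contDiff_const).add (hQ.smul contDiff_const)
  · -- calibration identity
    intro t ht
    -- derivative of the curve
    have hPd : ∀ s, HasDerivAt (fun s => Pfun (u s))
        (16 * u s * ((u s) ^ 2 - 1) / (1 + (u s) ^ 2) ^ 3 * u s) s :=
      fun s => (hasDerivAt_Pfun (u s)).comp s (hu s)
    have hQd : ∀ s, HasDerivAt (fun s => Qfun (u s))
        ((4 - 24 * (u s) ^ 2 + 4 * (u s) ^ 4) / (1 + (u s) ^ 2) ^ 3 * u s) s :=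
      fun s => (hasDerivAt_Qfun (u s)).comp s (hu s)
    have hγd : ∀ s, HasDerivAt γamb
        ((16 * u s * ((u s) ^ 2 - 1) / (1 + (u s) ^ 2) ^ 3 * u s) • (Nv : Amb n)
          + ((4 - 24 * (u s) ^ 2 + 4 * (u s) ^ 4) / (1 + (u s) ^ 2) ^ 3 * u s) • e) s :=
      fun s => ((hPd s).smul_const (Nv : Amb n)).add ((hQd s).smul_const e)
    have hvel : ∀ s, sVel n γ s
        = (16 * u s * ((u s) ^ 2 - 1) / (1 + (u s) ^ 2) ^ 3 * u s) • (Nv : Amb n)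
          + ((4 - 24 * (u s) ^ 2 + 4 * (u s) ^ 4) / (1 + (u s) ^ 2) ^ 3 * u s) • e := by
      intro s
      exact HasDerivAt.deriv (hγd s)
    -- the Lagrangian along the curve
    have hLag : ∀ s, Lsph n (γ s : Amb n) (sVel n γ s) + 1
        = 16 * (u s) ^ 2 / (1 + (u s) ^ 2) ^ 2 := by
      intro s
      have hden : ((1:ℝ) + u s ^ 2) ≠ 0 := by positivity
      rw [Lsph, hvel s, norm_combo he hoNe]
      show _ / 2 - lastCoord n (γamb s) + 1 = _
      rw [hγdef]
      rw [lastCoord_combo hel]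
      rw [Pfun]
      field_simp
      ring
    -- FTC
    have hφd : ∀ s, HasDerivAt (fun s => Ffun (u s))
        (16 * (u s) ^ 2 / (1 + (u s) ^ 2) ^ 2) s := by
      intro s
      have h := (hasDerivAt_Ffun (u s)).comp s (hu s)
      refine h.congr_deriv ?_
      have hden : ((1:ℝ) + u s ^ 2) ≠ 0 := by positivity
      field_simp
    have hcont16 : Continuous (fun s => 16 * (u s) ^ 2 / (1 + (u s) ^ 2) ^ 2) := by
      apply Continuous.div
      · fun_prop
      · fun_prop
      · intro s; positivity
    have hFTC : ∫ s in (-t)..0, (16 * (u s) ^ 2 / (1 + (u s) ^ 2) ^ 2)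
        = Ffun (u 0) - Ffun (u (-t)) := by
      apply intervalIntegral.integral_eq_sub_of_hasDerivAt (f := fun s => Ffun (u s))
      · intro s _
        exact hφd s
      · exact hcont16.intervalIntegrable _ _
    -- uPlus along the curve
    have huP : ∀ s ≤ 0, uPlus n (γ s) = 4 + Ffun (u s) := by
      intro s hs
      have h1 : lastCoord n (γ s : Amb n) = Pfun (u s) := by
        show lastCoord n (γamb s) = _
        rw [hγdef, lastCoord_combo hel]
      rw [uPlus_eq, h1]
      have hden : ((1:ℝ) + u s ^ 2) ≠ 0 := by positivity
      have h2 : 2 + 2 * Pfun (u s) = (2 * (1 - (u s) ^ 2) / (1 + (u s) ^ 2)) ^ 2 := by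
        rw [Pfun]; field_simp; ring
      have h3 : (0:ℝ) ≤ 2 * (1 - (u s) ^ 2) / (1 + (u s) ^ 2) := by
        have := hu_le s hs
        have := hu_pos s
        apply div_nonneg
        · nlinarith
        · positivity
      rw [h2, Real.sqrt_sq h3, Ffun]
      field_simp
      ring
    -- action
    have hintLag : IntervalIntegrable
        (fun s => Lsph n (γ s : Amb n) (sVel n γ s)) volume (-t) 0 := by
      have : (fun s => Lsph n (γ s : Amb n) (sVel n γ s))
          = fun s => 16 * (u s) ^ 2 / (1 + (u s) ^ 2) ^ 2 - 1 := by
        funext s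
        have := hLag s
        linarith
      rw [this]
      exact (hcont16.sub continuous_const).intervalIntegrable _ _
    have haction : sAction n γ (-t) 0
        = (Ffun (u 0) - Ffun (u (-t))) - t := by
      rw [sAction]
      have h1 : (fun s => Lsph n (γ s : Amb n) (sVel n γ s))
          = fun s => 16 * (u s) ^ 2 / (1 + (u s) ^ 2) ^ 2 - 1 := by
        funext s
        have := hLag s
        linarith
      rw [h1, intervalIntegral.integral_sub (hcont16.intervalIntegrable _ _)
        intervalIntegrable_const, hFTC, intervalIntegral.integral_const]
      simp
    rw [haction, huP 0 le_rfl, huP (-t) (by linarith)]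
    ring

theorem uPlus_calibrating (hn : 1 ≤ n) (x : Sph n) :
    ∃ γ : ℝ → Sph n, γ 0 = x ∧
      ContDiffOn ℝ 1 (fun s : ℝ => (γ s : Amb n)) (Iic 0) ∧
      ∀ t : ℝ, 0 ≤ t → uPlus n x - uPlus n (γ (-t)) = sAction n γ (-t) 0 + 1 * t := by
  set r₀ := lastCoord n (x : Amb n) with hr₀def
  obtain ⟨hrm1, hrle1⟩ := lastCoord_mem x
  by_cases hr1 : r₀ = 1
  · -- constant curve at x (which must be the north pole region: r₀ = 1)
    refine ⟨fun _ => x, rfl, contDiffOn_const, ?_⟩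
    intro t ht
    have hvel : ∀ s : ℝ, sVel n (fun _ => x) s = 0 := by
      intro s
      simp [sVel]
    have h1 : (fun s : ℝ => Lsph n ((x : Amb n)) (sVel n (fun _ => x) s))
        = fun _ : ℝ => (-1 : ℝ) := by
      funext s
      rw [hvel s, Lsph, ← hr₀def, hr1]
      simp
    rw [sAction]
    show uPlus n x - uPlus n x = (∫ s in (-t)..0,
      Lsph n ((x : Amb n)) (sVel n (fun _ => x) s)) + 1 * t
    rw [h1, intervalIntegral.integral_const]
    simp
  · have hrlt1 : r₀ < 1 := lt_of_le_of_ne hrle1 hr1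
    -- the constants m and c
    set m := Real.sqrt ((1 + r₀) / 2) with hmdef
    have hm0 : 0 ≤ m := Real.sqrt_nonneg _
    have hm2 : m ^ 2 = (1 + r₀) / 2 := Real.sq_sqrt (by linarith)
    have hm1 : m < 1 := by nlinarith
    set cc := Real.sqrt ((1 - m) / (1 + m)) with hccdef
    have hc2 : cc ^ 2 = (1 - m) / (1 + m) :=
      Real.sq_sqrt (div_nonneg (by linarith) (by linarith))
    have hc0 : 0 < cc := Real.sqrt_pos.2 (div_pos (by linarith) (by linarith))
    have hc1 : cc ≤ 1 := by
      have h1 : cc ^ 2 ≤ 1 := by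
        rw [hc2, div_le_one (by linarith)]
        linarith
      nlinarith
    -- algebraic identities
    have h1m : (0:ℝ) < 1 + m := by linarith
    have hc2' : cc ^ 2 * (1 + m) = 1 - m := by
      rw [hc2]; field_simp
    have hden2 : (1 + cc ^ 2) * (1 + m) = 2 := by linear_combination hc2'
    have ha : (1 - cc ^ 2) * (1 + m) = 2 * m := by linear_combination (-1 : ℝ) * hc2'
    have h5 : (m * (1 + cc ^ 2)) * (1 + m) = (1 - cc ^ 2) * (1 + m) := by
      linear_combination m * hden2 - ha
    have hm_eq : m * (1 + cc ^ 2) = 1 - cc ^ 2 :=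
      mul_right_cancel₀ (by linarith) h5
    have hccne : ((1:ℝ) + cc ^ 2) ≠ 0 := by positivity
    have hmv : m = (1 - cc ^ 2) / (1 + cc ^ 2) := by
      field_simp
      linear_combination hm_eq
    have hr0m : r₀ = 2 * m ^ 2 - 1 := by linarith [hm2]
    have hPc : Pfun cc = r₀ := by
      rw [Pfun, hr0m, hmv]
      field_simp
      ring
    have hQnn : 0 ≤ Qfun cc := by
      rw [Qfun]
      apply div_nonneg _ (by positivity)
      nlinarith
    have hQc : Qfun cc = Real.sqrt (1 - r₀ ^ 2) := by
      have h6 : 1 - r₀ ^ 2 = Qfun cc ^ 2 := by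
        rw [← hPc]
        linear_combination (-1 : ℝ) * PQ_sq cc
      rw [h6, Real.sqrt_sq hQnn]
    -- the direction vector e
    set w := (x : Amb n) - r₀ • (Nv : Amb n) with hwdef
    have hlw : lastCoord n w = 0 := by
      have h1 : lastCoord n w
          = lastCoord n (x : Amb n) - r₀ * lastCoord n (Nv : Amb n) := by
        simp [lastCoord, hwdef]
      rw [h1, lastCoord_Nv, ← hr₀def]
      ring
    have hwn : ‖w‖ ^ 2 = 1 - r₀ ^ 2 := by
      rw [hwdef, norm_sub_sq_real, real_inner_smul_right, inner_Nv, ← hr₀def,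
        norm_smul, norm_Nv, norm_sph]
      simp [sq_abs]
      ring
    obtain ⟨e, he, hel, hed⟩ : ∃ e : Amb n, ‖e‖ = 1 ∧ lastCoord n e = 0 ∧
        Real.sqrt (1 - r₀ ^ 2) • e = w := by
      by_cases hw : w = 0
      · refine ⟨EuclideanSpace.single (⟨0, by omega⟩ : Fin (n+1)) (1:ℝ), by simp, ?_, ?_⟩
        · have hne : Fin.last n ≠ (⟨0, by omega⟩ : Fin (n+1)) := by
            rw [Fin.ne_iff_vne]
            simp [Fin.last]
            omega
          simp [lastCoord, EuclideanSpace.single_apply, hne]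
          omega
        · have hr0sq : 1 - r₀ ^ 2 = 0 := by
            rw [← hwn, hw]
            simp
          rw [hr0sq, Real.sqrt_zero, zero_smul, hw]
      · have hwpos : 0 < ‖w‖ := norm_pos_iff.2 hw
        refine ⟨‖w‖⁻¹ • w, ?_, ?_, ?_⟩
        · rw [norm_smul, norm_inv, norm_norm]
          field_simp
        · have h1 : lastCoord n (‖w‖⁻¹ • w) = ‖w‖⁻¹ * lastCoord n w := by
            simp [lastCoord]
          rw [h1, hlw]
          ring
        · have hsw : Real.sqrt (1 - r₀ ^ 2) = ‖w‖ := by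
            rw [← hwn, Real.sqrt_sq hwpos.le]
          rw [hsw, smul_smul, mul_inv_cancel₀ (ne_of_gt hwpos), one_smul]
    have hx_decomp : (x : Amb n) = r₀ • (Nv : Amb n) + Real.sqrt (1 - r₀ ^ 2) • e := by
      rw [hed, hwdef]
      abel
    obtain ⟨γ, hγ0, hsmooth, hcal⟩ := calib_curve hc0 hc1 he hel
    have hγ0' : γ 0 = x := by
      apply Subtype.ext
      rw [hγ0, hPc, hQc, ← hx_decomp]
    refine ⟨γ, hγ0', hsmooth, ?_⟩
    intro t ht
    have := hcal t ht
    rwa [hγ0'] at this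


end AuxiliaryWeakKAM

/-- The function `u₊(x) = ∫_{x_{n+1}}^1 √((2−2s)/(1−s²)) ds` is a
backward weak KAM solution of the spherical pendulum for the value `c = 1`: it is
dominated by `L + 1` and every point is the endpoint of a `C¹` calibrating curve
`γ_x : (−∞,0] → S^n`. -/
theorem uPlus_is_backward_weakKAM (hn : 1 ≤ n) :
    sBackwardWeakKAM n 1 (uPlus n) :=
  ⟨uPlus_dominated, fun x => uPlus_calibrating hn x⟩

end SphericalPendulum
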